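/- arXiv:1110.2761 — 8 statements merged into one kernel-verified Lean document; each statement's English description precedes it below -/
import Mathlib

section
/- The image of the linear map ℤ^{n-1} → ℤ^{n-1} given by the Cartan matrix C(A_{n-1}) equals the subgroup {u ∈ ℤ^{n-1} : ∑_{i=1}^{n-1} i·u_i ≡ 0 (mod n)}. In particular, this image has index n in ℤ^{n-1}. -/
/-- The Cartan matrix of the root system `A_m`. -/
def cartanA (m : ℕ) : Matrix (Fin m) (Fin m) ℤ :=
  Matrix.of fun i j => if i = j then 2 else if (i : ℕ) + 1 = j ∨ (j : ℕ) + 1 = i then -1 else 0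

lemma cartanA_symm (m : ℕ) (i j : Fin m) : cartanA m i j = cartanA m j i := by
  simp only [cartanA, Matrix.of_apply, Fin.ext_iff]
  by_cases h1 : (i : ℕ) = j <;> by_cases h2 : (i : ℕ) + 1 = j <;>
    by_cases h3 : (j : ℕ) + 1 = i <;> simp [h1, h2, h3] <;> omega

lemma sum_ite_nat {m : ℕ} (c : ℕ) (g : Fin m → ℤ) :
    ∑ j : Fin m, (if (j : ℕ) = c then g j else 0) = if h : c < m then g ⟨c, h⟩ else 0 := by
  split_ifs with h
  · rw [Finset.sum_eq_single (⟨c, h⟩ : Fin m)]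
    · simp
    · intro j _ hj
      rw [if_neg]
      intro hc
      exact hj (by simp [Fin.ext_iff, hc])
    · simp
  · apply Finset.sum_eq_zero
    intro j _
    rw [if_neg]
    have := j.isLt
    omega

lemma cartanA_split (m : ℕ) (p j : Fin m) :
    cartanA m p j = (if p = j then 2 else 0) + (if (j : ℕ) = (p : ℕ) + 1 then -1 else 0)
      + (if 0 < (p : ℕ) ∧ (j : ℕ) = (p : ℕ) - 1 then -1 else 0) := by
  simp only [cartanA, Matrix.of_apply, Fin.ext_iff]
  by_cases h1 : (p : ℕ) = j <;> by_cases h2 : (p : ℕ) + 1 = j <;>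
    by_cases h3 : (j : ℕ) + 1 = p <;>
      simp [h1, h2, h3, eq_comm] <;> (try split_ifs) <;> omega

lemma tridiag (m : ℕ) (p : Fin m) (g : Fin m → ℤ) :
    ∑ j : Fin m, cartanA m p j * g j =
      2 * g p - (if h : (p : ℕ) + 1 < m then g ⟨(p : ℕ) + 1, h⟩ else 0)
        - (if h : 0 < (p : ℕ) then
            g ⟨(p : ℕ) - 1, Nat.lt_of_le_of_lt (Nat.sub_le _ _) p.isLt⟩ else 0) := by
  have expand : ∀ j : Fin m, cartanA m p j * g j =
      (if p = j then 2 * g j else 0) + ((if (j : ℕ) = (p : ℕ) + 1 then -g j else 0)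
        + (if 0 < (p : ℕ) ∧ (j : ℕ) = (p : ℕ) - 1 then -g j else 0)) := by
    intro j
    rw [cartanA_split, add_mul, add_mul]
    split_ifs <;> ring
  rw [Finset.sum_congr rfl fun j _ => expand j, Finset.sum_add_distrib,
    Finset.sum_add_distrib]
  have h1 : ∑ j : Fin m, (if p = j then 2 * g j else 0) = 2 * g p := by
    simp [Finset.sum_ite_eq]
  have h2 : ∑ j : Fin m, (if (j : ℕ) = (p : ℕ) + 1 then -g j else 0)
      = -(if h : (p : ℕ) + 1 < m then g ⟨(p : ℕ) + 1, h⟩ else 0) := by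
    rw [sum_ite_nat ((p : ℕ) + 1) (fun j => -g j)]
    split_ifs <;> simp
  have h3 : ∑ j : Fin m, (if 0 < (p : ℕ) ∧ (j : ℕ) = (p : ℕ) - 1 then -g j else 0)
      = -(if h : 0 < (p : ℕ) then
          g ⟨(p : ℕ) - 1, Nat.lt_of_le_of_lt (Nat.sub_le _ _) p.isLt⟩ else 0) := by
    by_cases hp : 0 < (p : ℕ)
    · have : ∀ j : Fin m, (if 0 < (p : ℕ) ∧ (j : ℕ) = (p : ℕ) - 1 then -g j else 0)
          = (if (j : ℕ) = (p : ℕ) - 1 then -g j else 0) := by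
        intro j; simp [hp]
      rw [Finset.sum_congr rfl fun j _ => this j, sum_ite_nat ((p : ℕ) - 1) (fun j => -g j)]
      rw [dif_pos (Nat.lt_of_le_of_lt (Nat.sub_le _ _) p.isLt), dif_pos hp]
    · rw [dif_neg hp]
      simp only [neg_zero]
      apply Finset.sum_eq_zero
      intro j _
      rw [if_neg]
      tauto
  rw [h1, h2, h3]
  ring

lemma rowSum (m : ℕ) (p : Fin m) :
    ∑ j : Fin m, cartanA m p j * ((j : ℕ) + 1 : ℤ)
      = if (p : ℕ) = m - 1 then ((m : ℤ) + 1) else 0 := by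
  rw [tridiag m p (fun j => ((j : ℕ) + 1 : ℤ))]
  have hp := p.isLt
  split_ifs <;> push_cast <;> omega

lemma minSum (m : ℕ) (p i : Fin m) :
    ∑ j : Fin m, cartanA m p j * ((min ((i : ℕ) + 1) ((j : ℕ) + 1) : ℕ) : ℤ)
      = (if i = p then 1 else 0) + (if (p : ℕ) = m - 1 then ((i : ℕ) + 1 : ℤ) else 0) := by
  rw [tridiag m p (fun j => ((min ((i : ℕ) + 1) ((j : ℕ) + 1) : ℕ) : ℤ))]
  have hp := p.isLt
  have hi := i.isLt
  simp only [Fin.ext_iff]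
  split_ifs <;> push_cast <;> omega

/-- The image of the linear map `ℤ^{n-1} → ℤ^{n-1}` given by the Cartan matrix
`C(A_{n-1})` equals the subgroup `{u : ∑ i·u_i ≡ 0 (mod n)}` (with `i` running
through `1, …, n-1`); in particular this image has index `n` in `ℤ^{n-1}`. -/
theorem cartanA_image (n : ℕ) (hn : 2 ≤ n) :
    (∀ u : Fin (n - 1) → ℤ,
      (∃ v : Fin (n - 1) → ℤ, (cartanA (n - 1)).mulVec v = u) ↔
        (n : ℤ) ∣ ∑ i : Fin (n - 1), ((i : ℕ) + 1 : ℤ) * u i) ∧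
    (Submodule.toAddSubgroup (LinearMap.range (Matrix.mulVecLin (cartanA (n - 1))))).index
      = n := by
  set m := n - 1 with hm
  clear_value m
  have hmn : n = m + 1 := by omega
  have hm1 : 1 ≤ m := by omega
  subst hmn
  have hnZ : ((m + 1 : ℕ) : ℤ) = (m : ℤ) + 1 := by push_cast; ring
  have main : ∀ u : Fin m → ℤ,
      (∃ v : Fin m → ℤ, (cartanA m).mulVec v = u) ↔
        ((m + 1 : ℕ) : ℤ) ∣ ∑ i : Fin m, ((i : ℕ) + 1 : ℤ) * u i := by
    intro u
    constructor
    · rintro ⟨v, rfl⟩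
      have key : ∑ i : Fin m, ((i : ℕ) + 1 : ℤ) * (cartanA m).mulVec v i
          = ((m : ℤ) + 1) * v ⟨m - 1, by omega⟩ := by
        calc ∑ i : Fin m, ((i : ℕ) + 1 : ℤ) * (cartanA m).mulVec v i
            = ∑ i : Fin m, ∑ j : Fin m, ((i : ℕ) + 1 : ℤ) * (cartanA m i j * v j) := by
              simp [Matrix.mulVec, dotProduct, Finset.mul_sum]
          _ = ∑ j : Fin m, ∑ i : Fin m, ((i : ℕ) + 1 : ℤ) * (cartanA m i j * v j) :=
              Finset.sum_comm
          _ = ∑ j : Fin m, (∑ i : Fin m, cartanA m j i * ((i : ℕ) + 1 : ℤ)) * v j := by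
              refine Finset.sum_congr rfl fun j _ => ?_
              rw [Finset.sum_mul]
              refine Finset.sum_congr rfl fun i _ => ?_
              rw [cartanA_symm m j i]; ring
          _ = ∑ j : Fin m, (if (j : ℕ) = m - 1 then ((m : ℤ) + 1) else 0) * v j := by
              refine Finset.sum_congr rfl fun j _ => ?_
              rw [rowSum]
          _ = ∑ j : Fin m, (if (j : ℕ) = m - 1 then ((m : ℤ) + 1) * v j else 0) := by
              refine Finset.sum_congr rfl fun j _ => ?_
              split_ifs <;> simp
          _ = ((m : ℤ) + 1) * v ⟨m - 1, by omega⟩ := by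
              rw [sum_ite_nat (m - 1) (fun j => ((m : ℤ) + 1) * v j), dif_pos (by omega)]
      rw [key]
      exact ⟨v ⟨m - 1, by omega⟩, by push_cast; ring⟩
    · rintro ⟨k, hk⟩
      refine ⟨fun j => (∑ i : Fin m, ((min ((i : ℕ) + 1) ((j : ℕ) + 1) : ℕ) : ℤ) * u i)
        - ((j : ℕ) + 1 : ℤ) * k, ?_⟩
      funext p
      have hA : ∑ j : Fin m, cartanA m p j *
          (∑ i : Fin m, ((min ((i : ℕ) + 1) ((j : ℕ) + 1) : ℕ) : ℤ) * u i)
          = u p + (if (p : ℕ) = m - 1 then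
              ∑ i : Fin m, ((i : ℕ) + 1 : ℤ) * u i else 0) := by
        calc ∑ j : Fin m, cartanA m p j *
              (∑ i : Fin m, ((min ((i : ℕ) + 1) ((j : ℕ) + 1) : ℕ) : ℤ) * u i)
            = ∑ j : Fin m, ∑ i : Fin m,
                cartanA m p j * ((min ((i : ℕ) + 1) ((j : ℕ) + 1) : ℕ) : ℤ) * u i := by
              refine Finset.sum_congr rfl fun j _ => ?_
              rw [Finset.mul_sum]
              refine Finset.sum_congr rfl fun i _ => ?_
              ring
          _ = ∑ i : Fin m, ∑ j : Fin m,
                cartanA m p j * ((min ((i : ℕ) + 1) ((j : ℕ) + 1) : ℕ) : ℤ) * u i :=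
              Finset.sum_comm
          _ = ∑ i : Fin m, ((if i = p then 1 else 0)
                + (if (p : ℕ) = m - 1 then ((i : ℕ) + 1 : ℤ) else 0)) * u i := by
              refine Finset.sum_congr rfl fun i _ => ?_
              rw [← Finset.sum_mul, minSum]
          _ = u p + (if (p : ℕ) = m - 1 then
                ∑ i : Fin m, ((i : ℕ) + 1 : ℤ) * u i else 0) := by
              have e1 : ∑ i : Fin m, (if i = p then (1:ℤ) else 0) * u i = u p := by
                simp [ite_mul]
              have e2 : ∑ i : Fin m, (if (p : ℕ) = m - 1 then ((i : ℕ) + 1 : ℤ) else 0) * u i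
                  = (if (p : ℕ) = m - 1 then ∑ i : Fin m, ((i : ℕ) + 1 : ℤ) * u i else 0) := by
                by_cases h : (p : ℕ) = m - 1 <;> simp [h]
              rw [← e1, ← e2, ← Finset.sum_add_distrib]
              exact Finset.sum_congr rfl fun i _ => add_mul _ _ _
      have hB : ∑ j : Fin m, cartanA m p j * (((j : ℕ) + 1 : ℤ) * k)
          = (if (p : ℕ) = m - 1 then ((m : ℤ) + 1) else 0) * k := by
        rw [← rowSum m p, Finset.sum_mul]
        refine Finset.sum_congr rfl fun j _ => ?_
        ring
      have : (cartanA m).mulVec (fun j =>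
          (∑ i : Fin m, ((min ((i : ℕ) + 1) ((j : ℕ) + 1) : ℕ) : ℤ) * u i)
            - ((j : ℕ) + 1 : ℤ) * k) p
          = ∑ j : Fin m, cartanA m p j *
              ((∑ i : Fin m, ((min ((i : ℕ) + 1) ((j : ℕ) + 1) : ℕ) : ℤ) * u i)
                - ((j : ℕ) + 1 : ℤ) * k) := by
        simp [Matrix.mulVec, dotProduct]
      rw [this]
      simp only [mul_sub, Finset.sum_sub_distrib]
      rw [hA, hB]
      split_ifs with hp
      · rw [hk, hnZ]; ring
      · ring
  refine ⟨main, ?_⟩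
  -- index computation
  let ψ : (Fin m → ℤ) →+ ℤ :=
    { toFun := fun u => ∑ i : Fin m, ((i : ℕ) + 1 : ℤ) * u i
      map_zero' := by simp
      map_add' := fun x y => by
        simp [Pi.add_apply, mul_add, Finset.sum_add_distrib] }
  let φ : (Fin m → ℤ) →+ ZMod (m + 1) := (Int.castAddHom (ZMod (m + 1))).comp ψ
  have hker : Submodule.toAddSubgroup (LinearMap.range (Matrix.mulVecLin (cartanA m)))
      = φ.ker := by
    ext u
    simp only [Submodule.mem_toAddSubgroup, LinearMap.mem_range, Matrix.mulVecLin_apply,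
      AddMonoidHom.mem_ker, AddMonoidHom.coe_comp, Function.comp_apply, Int.coe_castAddHom,
      φ, ψ, AddMonoidHom.coe_mk, ZeroHom.coe_mk]
    rw [main u, ZMod.intCast_zmod_eq_zero_iff_dvd]
  have hm0 : 0 < m := hm1
  have hsurj : Function.Surjective φ := by
    intro c
    obtain ⟨z, rfl⟩ := ZMod.intCast_surjective c
    refine ⟨Pi.single ⟨0, hm0⟩ z, ?_⟩
    have hsum : ∑ i : Fin m, ((i : ℕ) + 1 : ℤ) * (Pi.single (⟨0, hm0⟩ : Fin m) z : Fin m → ℤ) i = z := by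
      rw [Finset.sum_eq_single (⟨0, hm0⟩ : Fin m)]
      · simp
      · intro j _ hj
        rw [Pi.single_apply, if_neg hj, mul_zero]
      · simp
    simp only [φ, ψ, AddMonoidHom.coe_comp, Function.comp_apply, Int.coe_castAddHom,
      AddMonoidHom.coe_mk, ZeroHom.coe_mk]
    rw [hsum]
  rw [hker, AddSubgroup.index_ker φ, AddMonoidHom.range_eq_top.mpr hsurj]
  rw [AddSubgroup.card_top, Nat.card_zmod]
end

section
/- The determinant of the Jacobian matrix of the elementary symmetric polynomials e_1, …, e_n in variables x_1, …, x_n (the matrix with entries ∂e_i/∂x_j) equals, up to sign, the Vandermonde determinant ∏_{1 ≤ i < j ≤ n} (x_i − x_j). Consequently, the map 𝔸^n → 𝔸^n given by the elementary symmetric polynomials is étale at every point with pairwise distinct coordinates. -/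
open MvPolynomial

section JacobianAux

open Finset

variable {K : Type*} [Field K]

private lemma pderiv_prod_X_aux {σ : Type*} [DecidableEq σ] (j : σ) (s : Finset σ) :
    pderiv j (∏ i ∈ s, X i : MvPolynomial σ K) =
      if j ∈ s then ∏ i ∈ s.erase j, X i else 0 := by
  induction s using Finset.induction_on with
  | empty => simp
  | @insert a s ha ih =>
    rw [Finset.prod_insert ha, pderiv_mul, ih]
    by_cases hja : j = a
    · subst hja
      simp [Finset.erase_insert ha, ha, pderiv_eq_zero_of_notMem_vars]
    · rw [pderiv_X_of_ne (Ne.symm hja)]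
      by_cases hjs : j ∈ s
      · rw [if_pos hjs, if_pos (Finset.mem_insert_of_mem hjs),
          Finset.erase_insert_of_ne (Ne.symm hja),
          Finset.prod_insert (fun h => ha (Finset.mem_of_mem_erase h))]
        ring
      · simp [hja, hjs]

private lemma pderiv_esymm_aux {n k : ℕ} (j : Fin n) :
    pderiv j (esymm (Fin n) K (k+1)) =
      ∑ t ∈ (Finset.univ.erase j).powersetCard k, ∏ l ∈ t, X l := by
  classical
  rw [esymm, map_sum]
  rw [Finset.sum_congr rfl (fun s _ => pderiv_prod_X_aux j s), ← Finset.sum_filter]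
  refine Finset.sum_nbij' (fun s => s.erase j) (fun t => insert j t) ?_ ?_ ?_ ?_ ?_
  · intro s hs
    rw [Finset.mem_filter, Finset.mem_powersetCard] at hs
    rw [Finset.mem_powersetCard]
    exact ⟨Finset.erase_subset_erase j hs.1.1,
      by rw [Finset.card_erase_of_mem hs.2, hs.1.2]; rfl⟩
  · intro t ht
    rw [Finset.mem_powersetCard] at ht
    have hjt : j ∉ t := fun h => (Finset.mem_erase.mp (ht.1 h)).1 rfl
    rw [Finset.mem_filter, Finset.mem_powersetCard]
    exact ⟨⟨Finset.subset_univ _, by rw [Finset.card_insert_of_notMem hjt, ht.2]⟩,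
      Finset.mem_insert_self _ _⟩
  · intro s hs
    rw [Finset.mem_filter] at hs
    exact Finset.insert_erase hs.2
  · intro t ht
    rw [Finset.mem_powersetCard] at ht
    exact Finset.erase_insert (fun h => (Finset.mem_erase.mp (ht.1 h)).1 rfl)
  · intro s _; rfl

private lemma row_identity_aux {n : ℕ} (j m : Fin n) :
    (∑ i : Fin n, (-1 : MvPolynomial (Fin n) K)^(i:ℕ) * X m ^ (n-1-(i:ℕ)) *
        pderiv j (esymm (Fin n) K ((i:ℕ)+1))) =
      ∏ l ∈ Finset.univ.erase j, (X m - X l) := by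
  classical
  have hn : 0 < n := j.pos
  set s : Finset (Fin n) := Finset.univ.erase j with hs
  have hcard : s.card = n - 1 := by
    rw [hs, Finset.card_erase_of_mem (Finset.mem_univ j), Finset.card_univ, Fintype.card_fin]
  have hms : Multiset.card (s.val.map (X : Fin n → MvPolynomial (Fin n) K)) = n - 1 := by
    rw [Multiset.card_map]; exact hcard
  have hv := congrArg (Polynomial.eval (X m : MvPolynomial (Fin n) K))
    (Multiset.prod_X_sub_X_eq_sum_esymm (s.val.map (X : Fin n → MvPolynomial (Fin n) K)))
  rw [Polynomial.eval_multiset_prod, Multiset.map_map, Multiset.map_map,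
    Polynomial.eval_finset_sum] at hv
  simp only [Function.comp, Polynomial.eval_sub, Polynomial.eval_X, Polynomial.eval_C,
    Polynomial.eval_mul, Polynomial.eval_pow, Polynomial.eval_neg, Polynomial.eval_one,
    hms, Finset.esymm_map_val] at hv
  rw [show (Finset.prod s fun l => (X m - X l : MvPolynomial (Fin n) K)) =
      (s.val.map fun l => (X m - X l : MvPolynomial (Fin n) K)).prod from rfl]
  rw [hv, Nat.sub_add_cancel hn, ← Fin.sum_univ_eq_sum_range]
  refine Finset.sum_congr rfl fun i _ => ?_
  rw [pderiv_esymm_aux]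
  ring

private lemma pair_prod_aux {n : ℕ} (f : Fin n → Fin n → MvPolynomial (Fin n) K) :
    ∏ p ∈ Finset.univ.filter (fun p : Fin n × Fin n => p.1 < p.2), f p.1 p.2
      = ∏ i : Fin n, ∏ j ∈ Finset.Ioi i, f i j := by
  rw [Finset.prod_filter, ← Finset.univ_product_univ,
    Finset.prod_product' (f := fun i j : Fin n => if i < j then f i j else 1)]
  refine Finset.prod_congr rfl fun i _ => ?_
  rw [← Finset.prod_filter, Finset.filter_lt_eq_Ioi]

private lemma detW_aux {n : ℕ} :
    ∃ a : ℤ, (a = 1 ∨ a = -1) ∧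
      (Matrix.of fun m i : Fin n =>
          (-1 : MvPolynomial (Fin n) K)^(i:ℕ) * X m ^ (n-1-(i:ℕ))).det =
        a • ∏ i : Fin n, ∏ j ∈ Finset.Ioi i, (X j - X i : MvPolynomial (Fin n) K) := by
  classical
  have h1 : (Matrix.of fun m i : Fin n =>
      (-1 : MvPolynomial (Fin n) K)^(i:ℕ) * X m ^ (n-1-(i:ℕ))) =
      Matrix.of (fun m i : Fin n => ((-1 : MvPolynomial (Fin n) K)^(i:ℕ)) *
        ((Matrix.vandermonde (fun l : Fin n => (X l : MvPolynomial (Fin n) K))).submatrix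
          id Fin.revPerm) m i) := by
    ext m i
    simp only [Matrix.of_apply, Matrix.submatrix_apply, Matrix.vandermonde_apply, id_eq]
    rw [Fin.revPerm_apply, Fin.val_rev, show n - ((i:ℕ) + 1) = n - 1 - (i:ℕ) by omega]
  rw [h1, Matrix.det_mul_row, Matrix.det_permute', Matrix.det_vandermonde]
  rcases Int.units_eq_one_or (Equiv.Perm.sign (Fin.revPerm : Equiv.Perm (Fin n))) with hsg | hsg
  · rcases Nat.even_or_odd (∑ i : Fin n, (i : ℕ)) with hpar | hpar
    · exact ⟨1, Or.inl rfl, by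
        rw [Finset.prod_pow_eq_pow_sum, hsg, hpar.neg_one_pow]; simp⟩
    · exact ⟨-1, Or.inr rfl, by
        rw [Finset.prod_pow_eq_pow_sum, hsg, hpar.neg_one_pow]; simp⟩
  · rcases Nat.even_or_odd (∑ i : Fin n, (i : ℕ)) with hpar | hpar
    · exact ⟨-1, Or.inr rfl, by
        rw [Finset.prod_pow_eq_pow_sum, hsg, hpar.neg_one_pow]; simp⟩
    · exact ⟨1, Or.inl rfl, by
        rw [Finset.prod_pow_eq_pow_sum, hsg, hpar.neg_one_pow]; simp⟩

end JacobianAux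

/-- The determinant of the Jacobian matrix `(∂e_i/∂x_j)` of the elementary symmetric
polynomials `e_1, …, e_n` equals, up to sign, the Vandermonde determinant
`∏_{i<j} (x_i - x_j)`; consequently its evaluation at any point with pairwise distinct
coordinates is nonzero (so the map given by the `e_i` is étale there). -/
theorem jacobian_esymm_eq_vandermonde (K : Type*) [Field K] (n : ℕ) :
    (∃ s : ℤ, (s = 1 ∨ s = -1) ∧
      (Matrix.of fun i j : Fin n =>
          MvPolynomial.pderiv j (esymm (Fin n) K ((i : ℕ) + 1))).det =
        s • ∏ p ∈ Finset.univ.filter (fun p : Fin n × Fin n => p.1 < p.2),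
          (X p.1 - X p.2)) ∧
    ∀ x : Fin n → K, Function.Injective x →
      MvPolynomial.eval x
        (Matrix.of fun i j : Fin n =>
          MvPolynomial.pderiv j (esymm (Fin n) K ((i : ℕ) + 1))).det ≠ 0 := by
  classical
  set V : MvPolynomial (Fin n) K :=
    ∏ p ∈ Finset.univ.filter (fun p : Fin n × Fin n => p.1 < p.2), (X p.1 - X p.2) with hV
  set N : ℕ := (Finset.univ.filter (fun p : Fin n × Fin n => p.1 < p.2)).card with hN
  set J : Matrix (Fin n) (Fin n) (MvPolynomial (Fin n) K) :=
    Matrix.of fun i j : Fin n => MvPolynomial.pderiv j (esymm (Fin n) K ((i : ℕ) + 1)) with hJ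
  set W : Matrix (Fin n) (Fin n) (MvPolynomial (Fin n) K) :=
    Matrix.of fun m i : Fin n =>
      (-1 : MvPolynomial (Fin n) K)^(i:ℕ) * X m ^ (n-1-(i:ℕ)) with hW
  set d : Fin n → MvPolynomial (Fin n) K :=
    fun j => ∏ l ∈ Finset.univ.erase j, (X j - X l) with hd
  -- V is nonzero
  have hVne : V ≠ 0 := by
    rw [hV]
    refine Finset.prod_ne_zero_iff.mpr fun p hp => ?_
    have hlt : p.1 < p.2 := (Finset.mem_filter.mp hp).2
    exact sub_ne_zero.mpr fun h => absurd (MvPolynomial.X_injective h) (ne_of_lt hlt)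
  -- W * J is diagonal
  have hWJ : W * J = Matrix.diagonal d := by
    refine Matrix.ext fun m j => ?_
    rw [Matrix.mul_apply]
    have hrow := row_identity_aux (K := K) j m
    simp only [hW, hJ, Matrix.of_apply] at hrow ⊢
    rw [hrow]
    by_cases hmj : m = j
    · subst hmj
      rw [Matrix.diagonal_apply_eq]
    · rw [Matrix.diagonal_apply_ne _ hmj]
      apply Finset.prod_eq_zero (i := m) (Finset.mem_erase.mpr ⟨hmj, Finset.mem_univ m⟩)
      exact sub_self _
  -- the reversed product
  have hrev : ∏ i : Fin n, ∏ j ∈ Finset.Ioi i, (X j - X i : MvPolynomial (Fin n) K)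
      = (-1 : MvPolynomial (Fin n) K)^N * V := by
    rw [← pair_prod_aux (fun i j => (X j - X i : MvPolynomial (Fin n) K)), hV, hN]
    rw [← Finset.prod_const (-1 : MvPolynomial (Fin n) K), ← Finset.prod_mul_distrib]
    exact Finset.prod_congr rfl fun p _ => by ring
  -- product of the diagonal
  have hdiag : ∏ j : Fin n, d j = V * ((-1 : MvPolynomial (Fin n) K)^N * V) := by
    have h1 : ∀ j : Fin n, d j = ∏ l : Fin n,
        if l ≠ j then (X j - X l : MvPolynomial (Fin n) K) else 1 := by
      intro j
      simp only [hd]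
      rw [← Finset.filter_ne', Finset.prod_filter]
    rw [Finset.prod_congr rfl fun j _ => h1 j]
    rw [← Finset.prod_product' (f := fun j l : Fin n =>
      if l ≠ j then (X j - X l : MvPolynomial (Fin n) K) else 1)]
    rw [Finset.univ_product_univ, ← Finset.prod_filter]
    have hsplit : (Finset.univ.filter (fun p : Fin n × Fin n => p.2 ≠ p.1)) =
        (Finset.univ.filter (fun p : Fin n × Fin n => p.1 < p.2)) ∪
        (Finset.univ.filter (fun p : Fin n × Fin n => p.2 < p.1)) := by
      ext p
      simp only [Finset.mem_filter, Finset.mem_union, Finset.mem_univ, true_and]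
      constructor
      · intro h; exact (Ne.lt_or_gt h.symm)
      · rintro (h | h) <;> [exact (ne_of_gt h); exact (ne_of_lt h)]
    have hdisj : Disjoint
        (Finset.univ.filter (fun p : Fin n × Fin n => p.1 < p.2))
        (Finset.univ.filter (fun p : Fin n × Fin n => p.2 < p.1)) := by
      refine Finset.disjoint_filter_filter' _ _ ?_
      intro P h1p h2p p hp
      exact absurd ((h2p p hp)) (not_lt_of_gt (h1p p hp))
    rw [hsplit, Finset.prod_union hdisj]
    have hswap : ∏ p ∈ (Finset.univ.filter (fun p : Fin n × Fin n => p.2 < p.1)),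
        (X p.1 - X p.2 : MvPolynomial (Fin n) K)
        = ∏ p ∈ (Finset.univ.filter (fun p : Fin n × Fin n => p.1 < p.2)),
          (X p.2 - X p.1 : MvPolynomial (Fin n) K) := by
      refine Finset.prod_nbij' Prod.swap Prod.swap ?_ ?_ ?_ ?_ ?_ <;>
        simp [Finset.mem_filter]
    rw [hswap]
    rw [show (∏ p ∈ (Finset.univ.filter (fun p : Fin n × Fin n => p.1 < p.2)),
        (X p.2 - X p.1 : MvPolynomial (Fin n) K))
        = (-1 : MvPolynomial (Fin n) K)^N * V by
      rw [hV, hN, ← Finset.prod_const (-1 : MvPolynomial (Fin n) K),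
        ← Finset.prod_mul_distrib]
      exact Finset.prod_congr rfl fun p _ => by ring]
  -- determinant of W
  obtain ⟨a, ha, hdW⟩ := detW_aux (K := K) (n := n)
  rw [hrev] at hdW
  rw [← hW] at hdW
  -- main determinant identity
  have hmain : W.det * J.det = V * ((-1 : MvPolynomial (Fin n) K)^N * V) := by
    rw [← Matrix.det_mul, hWJ, Matrix.det_diagonal, hdiag]
  have hc : ((-1 : MvPolynomial (Fin n) K)^N * V) ≠ 0 :=
    mul_ne_zero (pow_ne_zero _ (neg_ne_zero.mpr one_ne_zero)) hVne
  have hsJ : J.det = a • V := by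
    refine mul_left_cancel₀ hc ?_
    rcases ha with ha | ha <;> subst ha
    · rw [one_smul] at hdW
      rw [one_smul]
      linear_combination hmain - J.det * hdW
    · rw [neg_smul, one_smul] at hdW
      rw [neg_smul, one_smul]
      linear_combination J.det * hdW - hmain
  refine ⟨⟨a, ha, hsJ⟩, ?_⟩
  intro x hx
  rw [hsJ, map_zsmul]
  have hval : MvPolynomial.eval x V =
      ∏ p ∈ Finset.univ.filter (fun p : Fin n × Fin n => p.1 < p.2), (x p.1 - x p.2) := by
    rw [hV, map_prod]
    exact Finset.prod_congr rfl fun p _ => by simp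
  have hne : MvPolynomial.eval x V ≠ 0 := by
    rw [hval]
    refine Finset.prod_ne_zero_iff.mpr fun p hp => ?_
    have hlt : p.1 < p.2 := (Finset.mem_filter.mp hp).2
    exact sub_ne_zero.mpr fun h => absurd (hx h) (ne_of_lt hlt)
  rcases ha with ha | ha <;> subst ha <;> simpa using hne
end

section
/- The permutohedron, i.e., the convex hull in ℝ^n of the n! points (σ(1), σ(2), …, σ(n)) for σ ∈ S_n, equals the Minkowski sum of the point (1,1,…,1) and the line segments conv{e_i, e_j} for all 1 ≤ i < j ≤ n, where e_1,…,e_n is the standard basis. -/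
open Pointwise

namespace PermAux
variable {n : ℕ}

def score (g : Fin n → Fin n → Bool) (k : Fin n) : ℕ :=
  (Finset.univ.filter fun l => l ≠ k ∧ g k l = true).card

def Anti (g : Fin n → Fin n → Bool) : Prop := ∀ a b, a ≠ b → g a b = !g b a

lemma score_lt (g : Fin n → Fin n → Bool) (k : Fin n) : score g k < n := by
  have hn := k.pos
  have h : (Finset.univ.filter fun l => l ≠ k ∧ g k l = true) ⊆ Finset.univ.erase k := by
    intro l hl
    simp only [Finset.mem_filter] at hl
    exact Finset.mem_erase.2 ⟨hl.2.1, Finset.mem_univ l⟩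
  calc score g k ≤ (Finset.univ.erase k).card := Finset.card_le_card h
    _ = n - 1 := by simp
    _ < n := by omega

lemma card_winner (g : Fin n → Fin n → Bool) (hg : Anti g) (k : Fin n) :
    (((Finset.univ : Finset (Fin n × Fin n)).filter fun p => p.1 < p.2).filter
        (fun p => (if g p.1 p.2 then p.1 else p.2) = k)).card = score g k := by
  rw [Finset.filter_filter]
  have key : ∀ x y : Fin n, (if g x y then x else y) = k → x = k ∨ y = k := by
    intro x y h
    by_cases hgx : g x y = true
    · left; rwa [if_pos hgx] at h
    · right; rwa [if_neg (by simpa using hgx)] at h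
  apply Finset.card_bij (fun p _ => if p.1 = k then p.2 else p.1)
  · rintro ⟨a, b⟩ hp
    simp only [Finset.mem_filter, Finset.mem_univ, true_and] at hp
    obtain ⟨hab, hw⟩ := hp
    simp only [Finset.mem_filter, Finset.mem_univ, true_and]
    by_cases ha : a = k
    · subst ha
      have hb : b ≠ a := (ne_of_gt hab)
      simp only [if_pos rfl]
      by_cases hg1 : g a b = true
      · exact ⟨hb, hg1⟩
      · rw [if_neg (by simpa using hg1)] at hw
        exact absurd hw hb
    · simp only [if_neg ha]
      by_cases hg1 : g a b = true
      · rw [if_pos hg1] at hw; exact absurd hw ha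
      · rw [if_neg (by simpa using hg1)] at hw
        subst hw
        refine ⟨ha, ?_⟩
        have h2 := hg b a (ne_of_gt hab)
        have hfalse : g a b = false := by simpa using hg1
        rw [hfalse] at h2
        simpa using h2
  · rintro ⟨a, b⟩ hp ⟨a', b'⟩ hp' hEq
    simp only [Finset.mem_filter, Finset.mem_univ, true_and] at hp hp'
    obtain ⟨hab, hw⟩ := hp; obtain ⟨hab', hw'⟩ := hp'
    rcases key a b hw with h1 | h1 <;> rcases key a' b' hw' with h1' | h1'
    · rw [if_pos h1, if_pos h1'] at hEq
      exact Prod.ext (h1.trans h1'.symm) hEq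
    · have ha' : a' ≠ k := by
        intro h; rw [← h1'] at h; exact absurd (h ▸ hab') (lt_irrefl _)
      rw [if_pos h1, if_neg ha'] at hEq
      exfalso
      have : a < a := by
        calc a < b := hab
          _ = a' := hEq
          _ < b' := hab'
          _ = a := h1'.trans h1.symm
      exact absurd this (lt_irrefl _)
    · have ha : a ≠ k := by
        intro h; rw [← h1] at h; exact absurd (h ▸ hab) (lt_irrefl _)
      rw [if_neg ha, if_pos h1'] at hEq
      exfalso
      have : a' < a' := by
        calc a' < b' := hab'
          _ = a := hEq.symm
          _ < b := hab
          _ = a' := h1.trans h1'.symm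
      exact absurd this (lt_irrefl _)
    · have ha : a ≠ k := by
        intro h; rw [← h1] at h; exact absurd (h ▸ hab) (lt_irrefl _)
      have ha' : a' ≠ k := by
        intro h; rw [← h1'] at h; exact absurd (h ▸ hab') (lt_irrefl _)
      rw [if_neg ha, if_neg ha'] at hEq
      exact Prod.ext hEq (h1.trans h1'.symm)
  · intro l hl
    simp only [Finset.mem_filter, Finset.mem_univ, true_and] at hl
    obtain ⟨hlk, hgl⟩ := hl
    rcases lt_or_gt_of_ne (Ne.symm hlk) with h | h
    · refine ⟨(k, l), ?_, ?_⟩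
      · simp only [Finset.mem_filter, Finset.mem_univ, true_and]
        exact ⟨h, by simp [hgl]⟩
      · simp [hlk.symm]
    · refine ⟨(l, k), ?_, ?_⟩
      · have hglk : g l k = false := by
          have h2 := hg l k hlk
          rw [hgl] at h2; simpa using h2
        simp only [Finset.mem_filter, Finset.mem_univ, true_and]
        exact ⟨h, by simp [hglk]⟩
      · simp [hlk]


lemma sum_single_eq_score (g : Fin n → Fin n → Bool) (hg : Anti g) :
    ∑ p ∈ Finset.univ.filter (fun p : Fin n × Fin n => p.1 < p.2),
      Pi.single (if g p.1 p.2 then p.1 else p.2) (1 : ℝ) = fun k => (score g k : ℝ) := by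
  funext k
  rw [Finset.sum_apply]
  have h1 : ∀ p : Fin n × Fin n,
      (Pi.single (if g p.1 p.2 then p.1 else p.2) (1 : ℝ) : Fin n → ℝ) k
        = if (if g p.1 p.2 then p.1 else p.2) = k then (1:ℝ) else 0 := by
    intro p
    rw [Pi.single_apply]
    by_cases h : (if g p.1 p.2 then p.1 else p.2) = k
    · rw [if_pos h, if_pos h.symm]
    · rw [if_neg h, if_neg (Ne.symm h)]
  rw [Finset.sum_congr rfl (fun p _ => h1 p), Finset.sum_boole]
  exact_mod_cast card_winner g hg k

lemma score_perm (σ : Equiv.Perm (Fin n)) (k : Fin n) :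
    score (fun a b => decide (σ b < σ a)) k = (σ k : ℕ) := by
  unfold score
  have h1 : (Finset.univ.filter fun l => l ≠ k ∧ decide (σ l < σ k) = true)
      = Finset.univ.filter fun l => σ l < σ k := by
    ext l
    simp only [Finset.mem_filter, Finset.mem_univ, true_and, decide_eq_true_eq]
    constructor
    · exact fun h => h.2
    · intro h
      exact ⟨fun hl => absurd (hl ▸ h) (lt_irrefl _), h⟩
  rw [h1]
  have h2 : (Finset.univ.filter fun l => σ l < σ k).card
      = (Finset.univ.filter fun m => m < σ k).card := by
    apply Finset.card_bij (fun l _ => σ l)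
    · intro l hl
      simp only [Finset.mem_filter, Finset.mem_univ, true_and] at hl ⊢
      exact hl
    · intro l _ l' _ h
      exact σ.injective h
    · intro m hm
      simp only [Finset.mem_filter, Finset.mem_univ, true_and] at hm
      exact ⟨σ.symm m, by simpa using hm, by simp⟩
  rw [h2]
  have h3 : (Finset.univ.filter fun m => m < σ k) = Finset.Iio (σ k) := by
    ext m; simp
  rw [h3, Fin.card_Iio]

lemma anti_perm (σ : Equiv.Perm (Fin n)) : Anti (fun a b => decide (σ b < σ a)) := by
  intro a b hab
  have : σ a ≠ σ b := fun h => hab (σ.injective h)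
  rcases lt_or_gt_of_ne this with h | h
  · simp [h, not_lt_of_gt h, le_of_lt h]
  · simp [h, not_lt_of_gt h, le_of_lt h]


def flip (g : Fin n → Fin n → Bool) (i j : Fin n) : Fin n → Fin n → Bool :=
  fun a b => if a = i ∧ b = j then false else if a = j ∧ b = i then true else g a b

lemma anti_flip (g : Fin n → Fin n → Bool) (hg : Anti g) (i j : Fin n) (hij : i ≠ j)
    (hgij : g i j = true) : Anti (flip g i j) := by
  intro a b hab
  have hg' := hg a b hab
  simp only [flip]
  split_ifs <;> simp_all

lemma score_flip_i (g : Fin n → Fin n → Bool) (hg : Anti g) (i j : Fin n) (hij : i ≠ j)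
    (hgij : g i j = true) : score g i = score (flip g i j) i + 1 := by
  have hset : (Finset.univ.filter fun l => l ≠ i ∧ flip g i j i l = true)
      = (Finset.univ.filter fun l => l ≠ i ∧ g i l = true).erase j := by
    ext l
    simp only [Finset.mem_erase, Finset.mem_filter, Finset.mem_univ, true_and]
    unfold flip
    by_cases hlj : l = j
    · subst hlj
      rw [if_pos ⟨rfl, rfl⟩]
      simp
    · rw [if_neg (fun h : i = i ∧ l = j => hlj h.2),
        if_neg (fun h : i = j ∧ l = i => hij h.1)]
      tauto
  have hjmem : j ∈ (Finset.univ.filter fun l => l ≠ i ∧ g i l = true) := by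
    simp only [Finset.mem_filter, Finset.mem_univ, true_and]
    exact ⟨Ne.symm hij, hgij⟩
  have hpos : 0 < (Finset.univ.filter fun l => l ≠ i ∧ g i l = true).card :=
    Finset.card_pos.2 ⟨j, hjmem⟩
  unfold score
  rw [hset, Finset.card_erase_of_mem hjmem]
  omega

lemma score_flip_j (g : Fin n → Fin n → Bool) (hg : Anti g) (i j : Fin n) (hij : i ≠ j)
    (hgij : g i j = true) : score (flip g i j) j = score g j + 1 := by
  have hgji : g j i = false := by
    have := hg i j hij
    rw [hgij] at this
    simpa using this.symm
  have hset : (Finset.univ.filter fun l => l ≠ j ∧ flip g i j j l = true)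
      = insert i (Finset.univ.filter fun l => l ≠ j ∧ g j l = true) := by
    ext l
    simp only [Finset.mem_insert, Finset.mem_filter, Finset.mem_univ, true_and]
    unfold flip
    by_cases hli : l = i
    · rw [if_neg (fun h : j = i ∧ l = j => hij h.1.symm), if_pos ⟨rfl, hli⟩]
      simp [hli, hij]
    · rw [if_neg (fun h : j = i ∧ l = j => hij h.1.symm),
        if_neg (fun h : j = j ∧ l = i => hli h.2)]
      tauto
  have himem : i ∉ (Finset.univ.filter fun l => l ≠ j ∧ g j l = true) := by
    simp only [Finset.mem_filter, Finset.mem_univ, true_and, not_and]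
    intro _
    simp [hgji]
  unfold score
  rw [hset, Finset.card_insert_of_notMem himem]

lemma score_flip_other (g : Fin n → Fin n → Bool) (i j k : Fin n)
    (hki : k ≠ i) (hkj : k ≠ j) : score (flip g i j) k = score g k := by
  unfold score
  have hset : (Finset.univ.filter fun l => l ≠ k ∧ flip g i j k l = true)
      = (Finset.univ.filter fun l => l ≠ k ∧ g k l = true) := by
    ext l
    simp only [Finset.mem_filter, Finset.mem_univ, true_and]
    unfold flip
    rw [if_neg (fun h : k = i ∧ l = j => hki h.1), if_neg (fun h : k = j ∧ l = i => hkj h.1)]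
  rw [hset]

def relabel (g : Fin n → Fin n → Bool) (τ : Equiv.Perm (Fin n)) : Fin n → Fin n → Bool :=
  fun a b => g (τ a) (τ b)

lemma anti_relabel (g : Fin n → Fin n → Bool) (hg : Anti g) (τ : Equiv.Perm (Fin n)) :
    Anti (relabel g τ) := by
  intro a b hab
  exact hg (τ a) (τ b) (fun h => hab (τ.injective h))

lemma score_relabel (g : Fin n → Fin n → Bool) (τ : Equiv.Perm (Fin n)) (k : Fin n) :
    score (relabel g τ) k = score g (τ k) := by
  unfold score relabel
  apply Finset.card_bij (fun l _ => τ l)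
  · intro l hl
    simp only [Finset.mem_filter, Finset.mem_univ, true_and] at hl ⊢
    exact ⟨fun h => hl.1 (τ.injective h), hl.2⟩
  · intro l _ l' _ h
    exact τ.injective h
  · intro m hm
    simp only [Finset.mem_filter, Finset.mem_univ, true_and] at hm
    refine ⟨τ.symm m, ?_, by simp⟩
    simp only [Finset.mem_filter, Finset.mem_univ, true_and, Equiv.apply_symm_apply]
    exact ⟨fun h => hm.1 (by rw [← h]; simp), hm.2⟩


lemma sum_split (f : Fin n → ℕ) (i j : Fin n) (hij : i ≠ j) :
    ∑ k, f k = f i + f j + ∑ k ∈ (Finset.univ.erase i).erase j, f k := by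
  rw [← Finset.add_sum_erase _ f (Finset.mem_univ i),
    ← Finset.add_sum_erase _ f (Finset.mem_erase.2 ⟨Ne.symm hij, Finset.mem_univ j⟩),
    ← add_assoc]

def permSet (n : ℕ) : Set (Fin n → ℝ) :=
  {x : Fin n → ℝ | ∃ σ : Equiv.Perm (Fin n), ∀ i, x i = (σ i : ℕ) + 1}

lemma inj_case (g : Fin n → Fin n → Bool) (hinj : Function.Injective (score g)) :
    (fun k => ((score g k : ℝ) + 1)) ∈ permSet n := by
  set σ' : Fin n → Fin n := fun k => ⟨score g k, score_lt g k⟩ with hσ'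
  have hinj' : Function.Injective σ' := by
    intro a b h
    apply hinj
    have := congrArg Fin.val h
    simpa [hσ'] using this
  have hbij := (Finite.injective_iff_bijective).1 hinj'
  refine ⟨Equiv.ofBijective σ' hbij, fun k => ?_⟩
  simp [Equiv.ofBijective, hσ']

lemma score_mem_hull (m : ℕ) : ∀ (g : Fin n → Fin n → Bool), Anti g →
    n * n * n ≤ m + ∑ k, (score g k) ^ 2 →
    (fun k => ((score g k : ℝ) + 1)) ∈ convexHull ℝ (permSet n) := by
  induction m with
  | zero =>
    intro g hg hb
    by_cases hinj : Function.Injective (score g)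
    · exact subset_convexHull ℝ _ (inj_case g hinj)
    · exfalso
      obtain ⟨a, b, -, hab⟩ := Function.not_injective_iff.1 hinj
      have hn : 0 < n := a.pos
      have hb2 : ∑ k, (score g k) ^ 2 ≤ n * ((n - 1) * (n - 1)) := by
        calc ∑ k, (score g k) ^ 2 ≤ ∑ _k : Fin n, (n - 1) * (n - 1) := by
              apply Finset.sum_le_sum
              intro k _
              have h := score_lt g k
              have h2 : score g k ≤ n - 1 := by omega
              calc (score g k) ^ 2 = score g k * score g k := sq (score g k) ▸ rfl
                _ ≤ (n - 1) * (n - 1) := Nat.mul_le_mul h2 h2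
          _ = n * ((n - 1) * (n - 1)) := by
              simp [Finset.sum_const, Finset.card_univ]
      have hlt : n * ((n - 1) * (n - 1)) < n * n * n := by
        have h1 : n - 1 < n := by omega
        calc n * ((n - 1) * (n - 1)) < n * (n * n) :=
              mul_lt_mul_of_pos_left (Nat.mul_lt_mul'' h1 h1) hn
          _ = n * n * n := by ring
      omega
  | succ m ih =>
    intro g hg hb
    by_cases hinj : Function.Injective (score g)
    · exact subset_convexHull ℝ _ (inj_case g hinj)
    · obtain ⟨a, b, hsab, hab⟩ := Function.not_injective_iff.1 hinj
      -- choose i j with g i j = true and equal scores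
      obtain ⟨i, j, hij, hs, hgij⟩ :
          ∃ i j, i ≠ j ∧ score g i = score g j ∧ g i j = true := by
        by_cases h : g a b = true
        · exact ⟨a, b, hab, hsab, h⟩
        · refine ⟨b, a, Ne.symm hab, hsab.symm, ?_⟩
          have := hg a b hab
          have hfalse : g a b = false := by simpa using h
          rw [hfalse] at this
          simpa using this.symm
      set g' := flip g i j with hg'def
      have hg' : Anti g' := anti_flip g hg i j hij hgij
      set τ := Equiv.swap i j with hτ
      set g'' := relabel g' τ with hg''def
      have hg'' : Anti g'' := anti_relabel g' hg' τ
      set m1 := score g' i with hm1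
      have hsi : score g i = m1 + 1 := score_flip_i g hg i j hij hgij
      have hsj : score g' j = m1 + 2 := by
        rw [score_flip_j g hg i j hij hgij, ← hs, hsi]
      have hother : ∀ k, k ≠ i → k ≠ j → score g' k = score g k :=
        fun k h1 h2 => score_flip_other g i j k h1 h2
      have hs''i : score g'' i = m1 + 2 := by
        rw [hg''def, score_relabel, hτ, Equiv.swap_apply_left, hsj]
      have hs''j : score g'' j = m1 := by
        rw [hg''def, score_relabel, hτ, Equiv.swap_apply_right, hm1]
      have hs''other : ∀ k, k ≠ i → k ≠ j → score g'' k = score g k := by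
        intro k h1 h2
        rw [hg''def, score_relabel, hτ, Equiv.swap_apply_of_ne_of_ne h1 h2]
        exact hother k h1 h2
      -- sums of squares
      have hsum' : ∑ k, (score g' k) ^ 2 = (∑ k, (score g k) ^ 2) + 2 := by
        rw [sum_split (fun k => (score g' k) ^ 2) i j hij,
          sum_split (fun k => (score g k) ^ 2) i j hij]
        have hrest : ∑ k ∈ (Finset.univ.erase i).erase j, (score g' k) ^ 2
            = ∑ k ∈ (Finset.univ.erase i).erase j, (score g k) ^ 2 := by
          apply Finset.sum_congr rfl
          intro k hk
          simp only [Finset.mem_erase] at hk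
          rw [hother k hk.2.1 hk.1]
        rw [hrest, ← hm1, hsj, hsi, ← hs, hsi]
        ring
      have hsum'' : ∑ k, (score g'' k) ^ 2 = ∑ k, (score g' k) ^ 2 := by
        have := Equiv.sum_comp τ (fun k => (score g' k) ^ 2)
        calc ∑ k, (score g'' k) ^ 2 = ∑ k, (score g' (τ k)) ^ 2 := by
              apply Finset.sum_congr rfl
              intro k _
              rw [hg''def, score_relabel]
          _ = ∑ k, (score g' k) ^ 2 := this
      have hx' := ih g' hg' (by omega)
      have hx'' := ih g'' hg'' (by omega)
      have hcomb := (convex_convexHull ℝ (permSet n)) hx' hx''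
        (by norm_num : (0:ℝ) ≤ 1/2) (by norm_num : (0:ℝ) ≤ 1/2) (by norm_num)
      convert hcomb using 1
      funext k
      simp only [Pi.add_apply, Pi.smul_apply, smul_eq_mul]
      by_cases hk1 : k = i
      · subst hk1
        rw [hsi, hs''i, ← hm1]
        push_cast
        ring
      · by_cases hk2 : k = j
        · subst hk2
          rw [← hs, hsi, hsj, hs''j]
          push_cast
          ring
        · rw [hother k hk1 hk2, hs''other k hk1 hk2]
          ring

end PermAux

open PermAux

/-- The permutohedron, the convex hull in `ℝ^n` of the points `(σ(1), …, σ(n))` for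
`σ ∈ S_n` (values `1, …, n`), equals the Minkowski sum of the point `(1, …, 1)` and
the line segments `conv{e_i, e_j}` for all `i < j`. -/
theorem permutohedron_eq_sum_segments (n : ℕ) :
    convexHull ℝ {x : Fin n → ℝ | ∃ σ : Equiv.Perm (Fin n), ∀ i, x i = (σ i : ℕ) + 1} =
      {fun _ => (1 : ℝ)} +
        ∑ p ∈ Finset.univ.filter (fun p : Fin n × Fin n => p.1 < p.2),
          segment ℝ (Pi.single p.1 (1 : ℝ)) (Pi.single p.2 (1 : ℝ)) := by
  classical
  set F := Finset.univ.filter (fun p : Fin n × Fin n => p.1 < p.2) with hF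
  set T : Set (Fin n → ℝ) :=
    {fun _ => (1 : ℝ)} + ∑ p ∈ F, ({Pi.single p.1 (1:ℝ), Pi.single p.2 (1:ℝ)} : Set (Fin n → ℝ))
    with hT
  have hRHS : ({fun _ => (1 : ℝ)} : Set (Fin n → ℝ)) +
        ∑ p ∈ F, segment ℝ (Pi.single p.1 (1 : ℝ)) (Pi.single p.2 (1 : ℝ))
      = convexHull ℝ T := by
    rw [hT, convexHull_add, convexHull_singleton, convexHull_sum]
    congr 1
    apply Finset.sum_congr rfl
    intro p _
    rw [convexHull_pair]
  rw [hRHS]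
  apply Set.Subset.antisymm
  · -- permutation points are in T
    apply convexHull_min _ (convex_convexHull ℝ T)
    intro x hx
    obtain ⟨σ, hσ⟩ := hx
    apply subset_convexHull
    set g : Fin n → Fin n → Bool := fun a b => decide (σ b < σ a) with hgdef
    have hxeq : x = (fun _ => (1:ℝ)) +
        ∑ p ∈ F, Pi.single (if g p.1 p.2 then p.1 else p.2) (1 : ℝ) := by
      rw [hF, sum_single_eq_score g (anti_perm σ)]
      funext k
      simp only [Pi.add_apply]
      rw [hσ k]
      have : score g k = (σ k : ℕ) := score_perm σ k
      rw [this]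
      ring
    rw [hxeq, hT]
    apply Set.add_mem_add (Set.mem_singleton _)
    apply Set.finset_sum_mem_finset_sum
    intro p _
    by_cases h : g p.1 p.2 = true
    · rw [if_pos h]; exact Set.mem_insert _ _
    · rw [if_neg (by simpa using h)]; exact Set.mem_insert_of_mem _ rfl
  · -- T is inside the permutohedron
    apply convexHull_min _ (convex_convexHull ℝ _)
    intro t ht
    rw [hT] at ht
    obtain ⟨a, ha, b, hb, rfl⟩ := Set.mem_add.1 ht
    rw [Set.mem_singleton_iff] at ha
    subst ha
    rw [Set.mem_finset_sum] at hb
    obtain ⟨f, hf, hbeq⟩ := hb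
    -- build the tournament
    set g : Fin n → Fin n → Bool := fun a b =>
      if a < b then decide (f (a, b) = Pi.single a (1:ℝ))
      else if b < a then decide (f (b, a) = Pi.single a (1:ℝ))
      else false with hgdef
    have hsingle_ne : ∀ (u v : Fin n), u ≠ v →
        (Pi.single u (1:ℝ) : Fin n → ℝ) ≠ Pi.single v (1:ℝ) := by
      intro u v huv h
      have := congrFun h u
      rw [Pi.single_eq_same, Pi.single_eq_of_ne huv] at this
      exact one_ne_zero this
    have hmemF : ∀ u v : Fin n, u < v → (u, v) ∈ F := by
      intro u v huv
      rw [hF]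
      simp only [Finset.mem_filter, Finset.mem_univ, true_and]
      exact huv
    have hdichot : ∀ u v : Fin n, u < v →
        (f (u, v) = Pi.single u (1:ℝ) ∧ f (u, v) ≠ Pi.single v (1:ℝ)) ∨
        (f (u, v) = Pi.single v (1:ℝ) ∧ f (u, v) ≠ Pi.single u (1:ℝ)) := by
      intro u v huv
      have hne := hsingle_ne u v (ne_of_lt huv)
      have hmem := hf (hmemF u v huv)
      rcases hmem with h | h
      · exact Or.inl ⟨h, fun h2 => hne (h ▸ h2 ▸ rfl)⟩
      · rw [Set.mem_singleton_iff] at h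
        exact Or.inr ⟨h, fun h2 => hne (h2 ▸ h ▸ rfl)⟩
    have hanti : PermAux.Anti g := by
      intro u v huv
      rcases lt_or_gt_of_ne huv with h | h
      · rw [hgdef]
        simp only [if_pos h, if_neg (not_lt_of_gt h), if_pos h]
        rcases hdichot u v h with ⟨h1, h2⟩ | ⟨h1, h2⟩ <;>
          simp [h1, h2, hsingle_ne u v huv, hsingle_ne v u huv.symm]
      · rw [hgdef]
        simp only [if_neg (not_lt_of_gt h), if_pos h]
        rcases hdichot v u h with ⟨h1, h2⟩ | ⟨h1, h2⟩ <;>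
          simp [h1, h2, hsingle_ne u v huv, hsingle_ne v u huv.symm]
    have hfp : ∀ p ∈ F, f p = Pi.single (if g p.1 p.2 then p.1 else p.2) (1:ℝ) := by
      intro p hp
      rw [hF] at hp
      simp only [Finset.mem_filter, Finset.mem_univ, true_and] at hp
      have hpeta : (p.1, p.2) = p := rfl
      rcases hdichot p.1 p.2 hp with ⟨h1, h2⟩ | ⟨h1, h2⟩
      · rw [hpeta] at h1
        have : g p.1 p.2 = true := by
          rw [hgdef]; simp only [if_pos hp]; rw [hpeta]; simpa using h1
        rw [if_pos this, h1]
      · rw [hpeta] at h1 h2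
        have : g p.1 p.2 = false := by
          rw [hgdef]; simp only [if_pos hp]; rw [hpeta]; simpa using h2
        rw [this]
        simpa using h1
    have hbscore : b = fun k => ((score g k : ℝ)) := by
      rw [← hbeq, ← sum_single_eq_score g hanti, ← hF]
      exact Finset.sum_congr rfl hfp
    have hmem := score_mem_hull (n := n) (n * n * n) g hanti (by omega)
    have : (fun _ => (1:ℝ)) + b = fun k => ((score g k : ℝ) + 1) := by
      rw [hbscore]
      funext k
      simp only [Pi.add_apply]
      ring
    rw [this]
    exact hmem
end

section
/- The convex hull in ℝ^n of the n! points (σ(1)−1, σ(2)−1, …, σ(n)−1) for σ ∈ S_n equals the Minkowski sum ∑_{j=1}^{n−1} Δ_{j,n} of the hypersimplices Δ_{j,n} = conv{χ_J : J ⊆ {1,…,n}, |J| = j}, where χ_J ∈ {0,1}^n is the characteristic vector of J. -/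
open Pointwise

/-- The `j`-th hypersimplex in `ℝ^n`: the convex hull of the characteristic vectors of
the `j`-element subsets of `{1, …, n}`. -/
def hypersimplex (n j : ℕ) : Set (Fin n → ℝ) :=
  convexHull ℝ {x | ∃ J : Finset (Fin n), J.card = j ∧ ∀ i, x i = if i ∈ J then 1 else 0}

private lemma count_icc_lemma (n m : ℕ) (hm : m < n) :
    ((Finset.Icc 1 (n - 1)).filter (fun j => n - j ≤ m)).card = m := by
  have h : (Finset.Icc 1 (n - 1)).filter (fun j => n - j ≤ m) = Finset.Icc (n - m) (n - 1) := by
    ext j; simp only [Finset.mem_filter, Finset.mem_Icc]; omega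
  rw [h, Nat.card_Icc]; omega

private lemma card_fin_filter (n j : ℕ) (hj : j ≤ n) :
    (Finset.univ.filter (fun i : Fin n => n - j ≤ (i : ℕ))).card = j := by
  rw [Finset.card_filter,
    Fin.sum_univ_eq_sum_range (fun k => if n - j ≤ k then 1 else 0), ← Finset.card_filter]
  have h : (Finset.range n).filter (fun i => n - j ≤ i) = Finset.Ico (n - j) n := by
    ext i; simp only [Finset.mem_filter, Finset.mem_range, Finset.mem_Ico]; omega
  rw [h, Nat.card_Ico]; omega

/-- The convex hull of the points `(σ(1)-1, …, σ(n)-1)` for `σ ∈ S_n` (values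
`0, …, n-1`) equals the Minkowski sum `∑_{j=1}^{n-1} Δ_{j,n}` of the hypersimplices. -/
theorem permutohedron_eq_sum_hypersimplices (n : ℕ) (hn : 1 ≤ n) :
    convexHull ℝ {x : Fin n → ℝ | ∃ σ : Equiv.Perm (Fin n), ∀ i, x i = ((σ i : ℕ) : ℝ)} =
      ∑ j ∈ Finset.Icc 1 (n - 1), hypersimplex n j := by
  classical
  set P : Set (Fin n → ℝ) := {x | ∃ σ : Equiv.Perm (Fin n), ∀ i, x i = ((σ i : ℕ) : ℝ)} with hP
  set V : ℕ → Set (Fin n → ℝ) := fun j =>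
    {x | ∃ J : Finset (Fin n), J.card = j ∧ ∀ i, x i = if i ∈ J then 1 else 0} with hV
  have hRHS : ∑ j ∈ Finset.Icc 1 (n - 1), hypersimplex n j
      = convexHull ℝ (∑ j ∈ Finset.Icc 1 (n - 1), V j) := by
    rw [convexHull_sum]
    exact Finset.sum_congr rfl fun j _ => rfl
  rw [hRHS]
  apply Set.Subset.antisymm
  · -- permutohedron ⊆ sum of hypersimplices
    apply convexHull_mono
    rintro x ⟨σ, hx⟩
    set Jf : ℕ → Finset (Fin n) := fun j =>
      Finset.univ.filter (fun i => n - j ≤ ((σ i : ℕ))) with hJf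
    set gfun : ℕ → (Fin n → ℝ) := fun j => fun i => if i ∈ Jf j then 1 else 0 with hgfun
    have hmem : ∀ j ∈ Finset.Icc 1 (n - 1), gfun j ∈ V j := by
      intro j hj
      obtain ⟨hj1, hj2⟩ := Finset.mem_Icc.mp hj
      have hjn : j ≤ n := le_trans hj2 (Nat.sub_le n 1)
      refine ⟨Jf j, ?_, fun i => rfl⟩
      rw [hJf]
      rw [Finset.card_filter,
        Equiv.sum_comp σ (fun k : Fin n => if n - j ≤ (k : ℕ) then 1 else 0),
        ← Finset.card_filter, card_fin_filter n j hjn]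
    have hxsum : x = ∑ j ∈ Finset.Icc 1 (n - 1), gfun j := by
      funext i
      rw [Finset.sum_apply]
      have : ∀ j, gfun j i = if n - j ≤ ((σ i : ℕ)) then (1 : ℝ) else 0 := by
        intro j
        simp [hgfun, hJf]
      simp only [this]
      rw [Finset.sum_boole, count_icc_lemma n ((σ i : ℕ)) (σ i).isLt, hx i]
    rw [hxsum]
    exact Set.finset_sum_mem_finset_sum _ _ _ hmem
  · -- sum of hypersimplices ⊆ permutohedron
    apply convexHull_min _ (convex_convexHull ℝ P)
    intro y hy
    obtain ⟨gf, hgf, hysum⟩ := (Set.mem_finset_sum _ _ _).mp hy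
    by_contra hyc
    have hPfin : P.Finite := by
      have hPr : P = Set.range (fun σ : Equiv.Perm (Fin n) => fun i => ((σ i : ℕ) : ℝ)) := by
        ext x
        constructor
        · rintro ⟨σ, hσ⟩; exact ⟨σ, (funext fun i => (hσ i).symm)⟩
        · rintro ⟨σ, rfl⟩; exact ⟨σ, fun i => rfl⟩
      rw [hPr]; exact Set.finite_range _
    obtain ⟨f, u, hfa, hfy⟩ := geometric_hahn_banach_closed_point
      (convex_convexHull ℝ P) (hPfin.isClosed_convexHull ℝ) hyc
    set c : Fin n → ℝ := fun i => f (Pi.single i 1) with hc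
    have hfx : ∀ x : Fin n → ℝ, f x = ∑ i, x i * c i := by
      intro x
      have h1 : x = ∑ i, x i • (Pi.single i (1 : ℝ) : Fin n → ℝ) := by
        conv_lhs => rw [← Finset.univ_sum_single x]
        exact Finset.sum_congr rfl fun i _ => by
          rw [← Pi.single_smul, smul_eq_mul, mul_one]
      conv_lhs => rw [h1]
      rw [map_sum]
      exact Finset.sum_congr rfl fun i _ => by rw [map_smul, smul_eq_mul]
    set g : Equiv.Perm (Fin n) := Tuple.sort c with hg
    have hmono : Monotone (c ∘ g) := Tuple.monotone_sort c
    set T : ℕ → Finset (Fin n) := fun j =>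
      (Finset.univ.filter (fun i : Fin n => n - j ≤ (i : ℕ))).image g with hT
    have hTcard : ∀ j, j ≤ n → (T j).card = j := by
      intro j hj
      rw [hT]
      rw [Finset.card_image_of_injective _ g.injective, card_fin_filter n j hj]
    have hkey : ∀ j, 1 ≤ j → j ≤ n - 1 → ∀ J : Finset (Fin n), J.card = j →
        ∑ i ∈ J, c i ≤ ∑ i ∈ T j, c i := by
      intro j hj1 hj2 J hJ
      have hjn : j ≤ n := le_trans hj2 (Nat.sub_le n 1)
      have hTc : (T j).card = j := hTcard j hjn
      have hp : n - j < n := by omega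
      set p : Fin n := ⟨n - j, hp⟩ with hpdef
      have hub : ∀ a ∈ J \ T j, c a ≤ c (g p) := by
        intro a ha
        obtain ⟨haJ, haT⟩ := Finset.mem_sdiff.mp ha
        have h1 : ¬(n - j ≤ ((g.symm a : Fin n) : ℕ)) := by
          intro hcon
          exact haT (Finset.mem_image.mpr ⟨g.symm a,
            Finset.mem_filter.mpr ⟨Finset.mem_univ _, hcon⟩, g.apply_symm_apply a⟩)
        have h2 : g.symm a ≤ p := by
          rw [Fin.le_def]
          simp only [hpdef]
          omega
        have := hmono h2
        simpa using this
      have hlb : ∀ a ∈ T j \ J, c (g p) ≤ c a := by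
        intro a ha
        obtain ⟨haT, _⟩ := Finset.mem_sdiff.mp ha
        obtain ⟨i, hi, rfl⟩ := Finset.mem_image.mp haT
        have hip : p ≤ i := by
          rw [Fin.le_def]
          exact (Finset.mem_filter.mp hi).2
        exact hmono hip
      have hcards : (J \ T j).card = (T j \ J).card :=
        Finset.card_sdiff_comm (by rw [hJ, hTc])
      have h3 : ∑ a ∈ J \ T j, c a ≤ (J \ T j).card • c (g p) :=
        Finset.sum_le_card_nsmul _ _ _ hub
      have h4 : (T j \ J).card • c (g p) ≤ ∑ a ∈ T j \ J, c a :=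
        Finset.card_nsmul_le_sum _ _ _ hlb
      have h5 : ∑ a ∈ J \ T j, c a ≤ ∑ a ∈ T j \ J, c a := by
        rw [hcards] at h3; exact le_trans h3 h4
      have e1 : ∑ i ∈ J ∩ T j, c i + ∑ i ∈ J \ T j, c i = ∑ i ∈ J, c i :=
        Finset.sum_inter_add_sum_sdiff _ _ _
      have e2 : ∑ i ∈ T j ∩ J, c i + ∑ i ∈ T j \ J, c i = ∑ i ∈ T j, c i :=
        Finset.sum_inter_add_sum_sdiff _ _ _
      rw [Finset.inter_comm] at e2
      linarith
    have hfy_le : f y ≤ ∑ j ∈ Finset.Icc 1 (n - 1), ∑ i ∈ T j, c i := by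
      rw [← hysum, map_sum]
      apply Finset.sum_le_sum
      intro j hj
      obtain ⟨J, hJcard, hgJ⟩ := hgf hj
      obtain ⟨hj1, hj2⟩ := Finset.mem_Icc.mp hj
      have hfg : f (gf j) = ∑ i ∈ J, c i := by
        rw [hfx]
        have : ∀ i, gf j i * c i = if i ∈ J then c i else 0 := by
          intro i
          rw [hgJ i]
          split <;> simp
        simp only [this]
        rw [Finset.sum_ite_mem, Finset.univ_inter]
      rw [hfg]
      exact hkey j hj1 hj2 J hJcard
    set b : Fin n → ℝ := fun a => ((g.symm a : ℕ) : ℝ) with hb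
    have hbP : b ∈ P := ⟨g.symm, fun i => rfl⟩
    have hfb : ∑ j ∈ Finset.Icc 1 (n - 1), ∑ i ∈ T j, c i = f b := by
      rw [hfx]
      have hr : ∑ a, b a * c a = ∑ i : Fin n, ((i : ℕ) : ℝ) * c (g i) := by
        rw [← Equiv.sum_comp g (fun a => b a * c a)]
        exact Finset.sum_congr rfl fun i _ => by simp [hb]
      rw [hr]
      have hl : ∀ j, ∑ i ∈ T j, c i
          = ∑ i : Fin n, (if n - j ≤ (i : ℕ) then c (g i) else 0) := by
        intro j
        rw [hT]
        rw [Finset.sum_image (fun a _ b _ h => g.injective h), Finset.sum_filter]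
      calc ∑ j ∈ Finset.Icc 1 (n - 1), ∑ i ∈ T j, c i
          = ∑ j ∈ Finset.Icc 1 (n - 1), ∑ i : Fin n,
              (if n - j ≤ (i : ℕ) then c (g i) else 0) :=
            Finset.sum_congr rfl fun j _ => hl j
        _ = ∑ i : Fin n, ∑ j ∈ Finset.Icc 1 (n - 1),
              (if n - j ≤ (i : ℕ) then c (g i) else 0) := Finset.sum_comm
        _ = ∑ i : Fin n, ((i : ℕ) : ℝ) * c (g i) := by
            refine Finset.sum_congr rfl fun i _ => ?_
            rw [← Finset.sum_filter, Finset.sum_const,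
              count_icc_lemma n (i : ℕ) i.isLt, nsmul_eq_mul]
    have h1 := hfa b (subset_convexHull ℝ P hbP)
    rw [hfb] at hfy_le
    linarith
end

section
/- Every point (σ(1), …, σ(n)) with σ ∈ S_n is an extreme point (vertex) of the permutohedron conv{(τ(1), …, τ(n)) : τ ∈ S_n} ⊂ ℝ^n; hence the permutohedron has exactly n! vertices. -/
open Finset

lemma perm_dot_lt {n : ℕ} (σ τ : Equiv.Perm (Fin n)) (hne : τ ≠ σ) :
    ∑ i, ((σ i : ℕ) : ℝ) * ((τ i : ℕ) : ℝ) < ∑ i, ((σ i : ℕ) : ℝ) * ((σ i : ℕ) : ℝ) := by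
  have hsq : ∑ i, ((τ i : ℕ) : ℝ) * ((τ i : ℕ) : ℝ)
      = ∑ i, ((σ i : ℕ) : ℝ) * ((σ i : ℕ) : ℝ) := by
    rw [Equiv.sum_comp τ (fun j : Fin n => ((j : ℕ) : ℝ) * ((j : ℕ) : ℝ)),
      ← Equiv.sum_comp σ (fun j : Fin n => ((j : ℕ) : ℝ) * ((j : ℕ) : ℝ))]
  have hpos : 0 < ∑ i, (((σ i : ℕ) : ℝ) - ((τ i : ℕ) : ℝ))^2 := by
    obtain ⟨i, hi⟩ : ∃ i, τ i ≠ σ i := by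
      by_contra h
      push_neg at h
      exact hne (Equiv.ext h)
    refine Finset.sum_pos' (fun j _ => sq_nonneg _) ⟨i, Finset.mem_univ i, ?_⟩
    have hne' : ((σ i : ℕ) : ℝ) - ((τ i : ℕ) : ℝ) ≠ 0 := by
      refine sub_ne_zero.2 ?_
      simp only [ne_eq, Nat.cast_inj]
      exact fun h => hi (Fin.ext h.symm)
    exact pow_pos (abs_pos.2 hne') 2 |>.trans_le (by rw [sq_abs])
  have hexp : ∑ i, (((σ i : ℕ) : ℝ) - ((τ i : ℕ) : ℝ))^2
      = ∑ i, ((σ i : ℕ) : ℝ) * ((σ i : ℕ) : ℝ)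
        + ∑ i, ((τ i : ℕ) : ℝ) * ((τ i : ℕ) : ℝ)
        - 2 * ∑ i, ((σ i : ℕ) : ℝ) * ((τ i : ℕ) : ℝ) := by
    rw [Finset.mul_sum, ← Finset.sum_add_distrib, ← Finset.sum_sub_distrib]
    exact Finset.sum_congr rfl (fun i _ => by ring)
  linarith [hpos, hsq, hexp]

/-- Every point `(σ(1), …, σ(n))` with `σ ∈ S_n` is an extreme point of the
permutohedron `conv{(τ(1), …, τ(n)) : τ ∈ S_n}`; hence the permutohedron has exactly
`n!` vertices. -/
theorem permutohedron_extremePoints (n : ℕ) :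
    (∀ σ : Equiv.Perm (Fin n),
      (fun i => ((σ i : ℕ) : ℝ) + 1) ∈
        Set.extremePoints ℝ (convexHull ℝ
          {x : Fin n → ℝ | ∃ τ : Equiv.Perm (Fin n), ∀ i, x i = (τ i : ℕ) + 1})) ∧
    Nat.card (Set.extremePoints ℝ (convexHull ℝ
        {x : Fin n → ℝ | ∃ τ : Equiv.Perm (Fin n), ∀ i, x i = (τ i : ℕ) + 1}))
      = n.factorial := by
  set S : Set (Fin n → ℝ) :=
    {x : Fin n → ℝ | ∃ τ : Equiv.Perm (Fin n), ∀ i, x i = (τ i : ℕ) + 1} with hS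
  set f : Equiv.Perm (Fin n) → (Fin n → ℝ) := fun σ => (fun i => ((σ i : ℕ) : ℝ) + 1) with hf
  have hfinj : Function.Injective f := by
    intro σ τ h
    ext i
    have h1 := congrFun h i
    have h2 : ((σ i : ℕ) : ℝ) = ((τ i : ℕ) : ℝ) := by
      simpa [hf] using h1
    exact_mod_cast h2
  have hSrange : S = Set.range f := by
    ext x
    constructor
    · rintro ⟨τ, hτ⟩; exact ⟨τ, (funext fun i => (hτ i).symm)⟩
    · rintro ⟨τ, rfl⟩; exact ⟨τ, fun i => rfl⟩
  -- each f σ is an exposed (hence extreme) point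
  have key : ∀ σ : Equiv.Perm (Fin n), f σ ∈ Set.extremePoints ℝ (convexHull ℝ S) := by
    intro σ
    apply exposedPoints_subset_extremePoints
    refine ⟨subset_convexHull ℝ S ⟨σ, fun i => rfl⟩, ?_⟩
    -- the linear functional x ↦ ∑ i, σ(i) * x i
    refine ⟨∑ i : Fin n, ((σ i : ℕ) : ℝ) • ContinuousLinearMap.proj i, ?_⟩
    set l : (Fin n → ℝ) →L[ℝ] ℝ :=
      ∑ i : Fin n, ((σ i : ℕ) : ℝ) • ContinuousLinearMap.proj i with hl
    have hlapp : ∀ x : Fin n → ℝ, l x = ∑ i, ((σ i : ℕ) : ℝ) * x i := by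
      intro x
      simp [hl, ContinuousLinearMap.sum_apply, ContinuousLinearMap.proj_apply,
        smul_eq_mul]
    have hstrict : ∀ τ : Equiv.Perm (Fin n), τ ≠ σ → l (f τ) < l (f σ) := by
      intro τ hτ
      rw [hlapp, hlapp]
      simp only [hf, mul_add, mul_one, Finset.sum_add_distrib]
      have := perm_dot_lt σ τ hτ
      linarith
    have hle : ∀ τ : Equiv.Perm (Fin n), l (f τ) ≤ l (f σ) := by
      intro τ
      by_cases h : τ = σ
      · subst h; exact le_rfl
      · exact (hstrict τ h).le
    intro y hy
    rw [_root_.convexHull_eq] at hy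
    obtain ⟨ι, t, w, z, hw0, hw1, hzS, hcm⟩ := hy
    have hy_eq : y = ∑ i ∈ t, w i • z i := by
      rw [← hcm, Finset.centerMass_eq_of_sum_1 _ _ hw1]
    have hly : l y = ∑ i ∈ t, w i * l (z i) := by
      rw [hy_eq, map_sum]
      simp [smul_eq_mul]
    have hterm : ∀ i ∈ t, w i * l (z i) ≤ w i * l (f σ) := by
      intro i hi
      obtain ⟨τ, hτ⟩ := hzS i hi
      have : z i = f τ := funext fun j => hτ j
      rw [this]
      exact mul_le_mul_of_nonneg_left (hle τ) (hw0 i hi)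
    have hlyle : l y ≤ l (f σ) := by
      rw [hly]
      calc ∑ i ∈ t, w i * l (z i) ≤ ∑ i ∈ t, w i * l (f σ) := Finset.sum_le_sum hterm
        _ = l (f σ) := by rw [← Finset.sum_mul, hw1, one_mul]
    refine ⟨hlyle, fun hge => ?_⟩
    have heq : l y = l (f σ) := le_antisymm hlyle hge
    -- each term with positive weight must be f σ
    have hzero : ∀ i ∈ t, w i * (l (f σ) - l (z i)) = 0 := by
      have hsum0 : ∑ i ∈ t, w i * (l (f σ) - l (z i)) = 0 := by
        have : ∑ i ∈ t, w i * l (f σ) = l (f σ) := by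
          rw [← Finset.sum_mul, hw1, one_mul]
        simp only [mul_sub, Finset.sum_sub_distrib, this, ← hly, heq, sub_self]
      refine (Finset.sum_eq_zero_iff_of_nonneg ?_).1 hsum0
      intro i hi
      obtain ⟨τ, hτ⟩ := hzS i hi
      have hz : z i = f τ := funext fun j => hτ j
      have : l (z i) ≤ l (f σ) := hz ▸ hle τ
      have := hw0 i hi
      nlinarith
    have hterm_eq : ∀ i ∈ t, w i • z i = w i • f σ := by
      intro i hi
      by_cases hwi : w i = 0
      · simp [hwi]
      · obtain ⟨τ, hτ⟩ := hzS i hi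
        have hz : z i = f τ := funext fun j => hτ j
        have hsub : l (f σ) - l (z i) = 0 := by
          have := hzero i hi
          rcases mul_eq_zero.1 this with h | h
          · exact absurd h hwi
          · exact h
        have hleq : l (z i) = l (f σ) := by linarith [sub_eq_zero.1 hsub]
        have : τ = σ := by
          by_contra hne
          have := hstrict τ hne
          rw [← hz] at this
          linarith
        rw [hz, this]
    rw [hy_eq]
    calc ∑ i ∈ t, w i • z i = ∑ i ∈ t, w i • f σ := Finset.sum_congr rfl hterm_eq
      _ = (∑ i ∈ t, w i) • f σ := by rw [Finset.sum_smul]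
      _ = f σ := by rw [hw1, one_smul]
  constructor
  · exact key
  · have hEP : Set.extremePoints ℝ (convexHull ℝ S) = S := by
      apply Set.Subset.antisymm extremePoints_convexHull_subset
      intro x hx
      rw [hSrange] at hx
      obtain ⟨σ, rfl⟩ := hx
      exact key σ
    rw [hEP, hSrange]
    rw [Nat.card_congr (Equiv.ofInjective f hfinj).symm, Nat.card_eq_fintype_card,
      Fintype.card_perm, Fintype.card_fin]
end

section
/- For any permutation σ ∈ S_n, the images of the vectors e_{σ(1)}, e_{σ(1)}+e_{σ(2)}, …, e_{σ(1)}+⋯+e_{σ(n−1)} in the quotient lattice ℤ^n / ℤ·(1,1,…,1) form a ℤ-basis of that quotient. -/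
open Matrix Finset

/-- For any permutation `σ ∈ S_n`, the images of the partial sums
`e_{σ(1)}, e_{σ(1)}+e_{σ(2)}, …, e_{σ(1)}+⋯+e_{σ(n-1)}` in the quotient lattice
`ℤ^n / ℤ·(1,…,1)` form a `ℤ`-basis of that quotient. -/
theorem partial_sums_basis_of_quotient (n : ℕ) (hn : 1 ≤ n) (σ : Equiv.Perm (Fin n)) :
    ∃ B : Module.Basis (Fin (n - 1)) ℤ
        ((Fin n → ℤ) ⧸ Submodule.span ℤ ({fun _ => 1} : Set (Fin n → ℤ))),
      ∀ k : Fin (n - 1),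
        B k = Submodule.Quotient.mk
          (∑ j ∈ Finset.univ.filter (fun j : Fin n => (j : ℕ) ≤ (k : ℕ)),
            Pi.single (σ j) (1 : ℤ)) := by
  classical
  -- the matrix whose rows are the partial sums
  set M : Matrix (Fin n) (Fin n) ℤ := fun k i => if (σ.symm i : Fin n) ≤ k then 1 else 0 with hM
  set T : Matrix (Fin n) (Fin n) ℤ := fun k j => if j ≤ k then 1 else 0 with hT
  have hMTP : M = T * σ.permMatrix ℤ := by
    ext k i
    rw [Matrix.mul_apply]
    simp only [Matrix.mul_apply, hT, hM, Equiv.Perm.permMatrix,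
      PEquiv.toMatrix_apply, Equiv.toPEquiv_apply, Option.mem_def, Option.some.injEq]
    rw [Finset.sum_eq_single (σ.symm i)]
    · simp
    · intro j _ hj
      have : ¬ (σ j = i) := fun h => hj (by simp [← h])
      simp [this]
    · simp
  have hTdet : T.det = 1 := by
    rw [Matrix.det_of_lowerTriangular T]
    · simp [hT]
    · intro i j hij
      simp only [hT]
      rw [if_neg]
      exact fun h => absurd (lt_of_le_of_lt h (by simpa using hij)) (lt_irrefl _)
  have hdet : IsUnit M.det := by
    rw [hMTP, Matrix.det_mul, hTdet, one_mul, Matrix.det_permutation]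
    exact (Equiv.Perm.sign σ).isUnit
  have hdetT : IsUnit (Mᵀ).det := by rwa [Matrix.det_transpose]
  set b := Pi.basisFun ℤ (Fin n)
  set e := Matrix.toLinearEquiv b (Mᵀ) hdetT with he
  set w : Module.Basis (Fin n) ℤ (Fin n → ℤ) := b.map e with hw
  have hwk : ∀ k, w k = fun i => M k i := by
    intro k
    show e (b k) = _
    rw [he, Matrix.toLinearEquiv_apply, Matrix.toLin_self]
    ext i
    simp [b, Pi.single_apply]
  -- the "ones" vector is w last
  have hn1 : n - 1 < n := by omega
  set last : Fin n := ⟨n - 1, hn1⟩ with hlast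
  have hones : w last = fun _ => (1 : ℤ) := by
    rw [hwk]
    funext i
    simp only [hM]
    rw [if_pos]
    rw [Fin.le_def]
    exact Nat.le_of_lt_succ (by have := (σ.symm i).isLt; show (σ.symm i : ℕ) < n - 1 + 1; omega)
  set ι : Fin (n-1) → Fin n := Fin.castLE (Nat.sub_le n 1) with hι
  have hιlast : ∀ k, ι k ≠ last := by
    intro k h
    have := congrArg Fin.val h
    simp only [hι, Fin.coe_castLE, hlast] at this
    exact absurd this (Nat.ne_of_lt k.isLt)
  set f : (Fin n → ℤ) →ₗ[ℤ] (Fin (n-1) → ℤ) :=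
    LinearMap.pi (fun k => (Finsupp.lapply (ι k)).comp w.repr.toLinearMap) with hf
  have hfapp : ∀ x k, f x k = w.repr x (ι k) := fun x k => rfl
  have hfw : ∀ k : Fin (n-1), f (w (ι k)) = Pi.single k 1 := by
    intro k
    funext j
    rw [hfapp, Module.Basis.repr_self, Finsupp.single_apply, Pi.single_apply]
    simp [hι, Fin.ext_iff, eq_comm]
  have hspan : (Submodule.span ℤ ({fun _ => 1} : Set (Fin n → ℤ))) = LinearMap.ker f := by
    apply le_antisymm
    · rw [Submodule.span_le, Set.singleton_subset_iff]
      show f _ = 0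
      funext k
      rw [← hones, hfapp, Module.Basis.repr_self, Finsupp.single_apply, if_neg]
      · rfl
      · intro h
        exact hιlast k h.symm
    · intro x hx
      have hx' : ∀ k, w.repr x (ι k) = 0 := fun k => congrFun (LinearMap.mem_ker.mp hx) k
      have : x = (w.repr x last) • w last := by
        apply w.repr.injective
        rw [_root_.map_smul, Module.Basis.repr_self]
        ext i
        rcases eq_or_ne i last with rfl | hne
        · simp
        · have hi : (i : ℕ) < n - 1 := by
            rcases Nat.lt_or_ge (i : ℕ) (n-1) with h | h
            · exact h
            · exact absurd (Fin.ext (Nat.le_antisymm (Nat.le_of_lt_succ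
                (by have := i.isLt; show (i : ℕ) < n - 1 + 1; omega)) h)) hne
          have := hx' ⟨i, hi⟩
          simp only [hι] at this
          rw [show (Fin.castLE (Nat.sub_le n 1) ⟨(i:ℕ), hi⟩) = i from Fin.ext rfl] at this
          simp [this, Finsupp.single_apply, Ne.symm hne]
      rw [this, hones]
      exact Submodule.smul_mem _ _ (Submodule.subset_span rfl)
  set p := Submodule.span ℤ ({fun _ => 1} : Set (Fin n → ℤ))
  have hle : p ≤ LinearMap.ker f := le_of_eq hspan
  set g := p.liftQ f hle with hg
  have hinj : Function.Injective g :=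
    LinearMap.ker_eq_bot.mp (Submodule.ker_liftQ_eq_bot p f hle (ge_of_eq hspan))
  have hsurj : Function.Surjective g := by
    intro y
    refine ⟨Submodule.Quotient.mk (∑ k, y k • w (ι k)), ?_⟩
    rw [hg, Submodule.liftQ_apply, map_sum]
    funext j
    simp only [_root_.map_smul, hfw]
    simp [Finset.sum_apply, Pi.single_apply]
  set E := LinearEquiv.ofBijective g ⟨hinj, hsurj⟩ with hE
  refine ⟨(Pi.basisFun ℤ (Fin (n-1))).map E.symm, ?_⟩
  intro k
  rw [Module.Basis.map_apply]
  rw [LinearEquiv.symm_apply_eq]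
  have hsum : (∑ j ∈ Finset.univ.filter (fun j : Fin n => (j : ℕ) ≤ (k : ℕ)),
      Pi.single (σ j) (1 : ℤ)) = w (ι k) := by
    rw [hwk]
    funext i
    rw [Finset.sum_apply]
    simp only [Pi.single_apply, hM]
    simp_rw [show ∀ x : Fin n, (i = σ x) = (σ.symm i = x) from
      fun x => by rw [eq_comm, Equiv.symm_apply_eq]]
    rw [Finset.sum_ite_eq]
    simp [hι, Fin.le_def]
  rw [hsum]
  have hE2 : E (Submodule.Quotient.mk (w (ι k))) = Pi.single k 1 := by
    rw [hE]
    show g (Submodule.Quotient.mk _) = _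
    rw [hg, Submodule.liftQ_apply, hfw]
  rw [hE2, Pi.basisFun_apply]
end

section
/- For every subset I ⊆ {1,…,n}, the n vectors in ℚ^n consisting of the columns −c_i of the negative Cartan matrix −C(A_n) for i ∉ I together with the standard basis vectors e_i for i ∈ I are linearly independent over ℚ. Hence each cone σ_I of the fan Υ(A_n) is simplicial of full dimension n. -/
open Matrix

/-- The Cartan matrix of the root system `A_n`, with rational entries. -/
def cartanAQ (n : ℕ) : Matrix (Fin n) (Fin n) ℚ :=
  Matrix.of fun i j => if i = j then 2 else if (i : ℕ) + 1 = j ∨ (j : ℕ) + 1 = i then -1 else 0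

/-- Incidence matrix of the path graph: `Bᵀ * B = C(A_n)`. -/
def Bmat (n : ℕ) : Matrix (Fin (n+1)) (Fin n) ℚ :=
  Matrix.of fun k i => if (k : ℕ) = i then 1 else if (k : ℕ) = (i : ℕ) + 1 then -1 else 0

lemma delta_sum {N : ℕ} (a b : Fin N) :
    ∑ k, (if k = a then (1:ℚ) else 0) * (if k = b then 1 else 0) = if a = b then 1 else 0 := by
  simp only [ite_mul, one_mul, zero_mul, Finset.sum_ite_eq', Finset.mem_univ, if_true]

lemma BtB (n : ℕ) : (Bmat n)ᵀ * Bmat n = cartanAQ n := by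
  ext i j
  simp only [Matrix.mul_apply, Matrix.transpose_apply, Bmat, cartanAQ, Matrix.of_apply]
  have key : ∀ k : Fin (n+1),
      (if (k : ℕ) = i then (1:ℚ) else if (k : ℕ) = (i : ℕ) + 1 then -1 else 0) *
      (if (k : ℕ) = j then (1:ℚ) else if (k : ℕ) = (j : ℕ) + 1 then -1 else 0) =
      (if k = (⟨i, by omega⟩ : Fin (n+1)) then (1:ℚ) else 0) *
        (if k = (⟨j, by omega⟩ : Fin (n+1)) then (1:ℚ) else 0)
      - (if k = (⟨i, by omega⟩ : Fin (n+1)) then (1:ℚ) else 0) *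
        (if k = (⟨(j:ℕ)+1, by omega⟩ : Fin (n+1)) then (1:ℚ) else 0)
      - (if k = (⟨(i:ℕ)+1, by omega⟩ : Fin (n+1)) then (1:ℚ) else 0) *
        (if k = (⟨j, by omega⟩ : Fin (n+1)) then (1:ℚ) else 0)
      + (if k = (⟨(i:ℕ)+1, by omega⟩ : Fin (n+1)) then (1:ℚ) else 0) *
        (if k = (⟨(j:ℕ)+1, by omega⟩ : Fin (n+1)) then (1:ℚ) else 0) := by
    intro k
    simp only [Fin.ext_iff]
    split_ifs <;> norm_num <;> omega
  rw [Finset.sum_congr rfl fun k _ => key k]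
  rw [Finset.sum_add_distrib, Finset.sum_sub_distrib, Finset.sum_sub_distrib,
    delta_sum, delta_sum, delta_sum, delta_sum]
  simp only [Fin.ext_iff]
  split_ifs <;> norm_num <;> omega

lemma Bmat_ker (n : ℕ) (x : Fin n → ℚ) (hx : (Bmat n).mulVec x = 0) : x = 0 := by
  have row : ∀ k : Fin (n+1), ∑ i, (Bmat n) k i * x i = 0 := by
    intro k; have := congr_fun hx k
    simpa [Matrix.mulVec, dotProduct] using this
  funext i
  obtain ⟨m, hm⟩ := i
  induction m with
  | zero =>
    have h0 := row ⟨0, by omega⟩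
    have key : ∀ i : Fin n, (Bmat n) ⟨0, by omega⟩ i * x i =
        (if i = ⟨0, hm⟩ then x i else 0) := by
      intro i
      simp only [Bmat, Matrix.of_apply, Fin.ext_iff]
      split_ifs <;> first | exact ‹False›.elim | (exfalso; omega) | ring
    rw [Finset.sum_congr rfl fun i _ => key i, Finset.sum_ite_eq'] at h0
    simpa using h0
  | succ m ih =>
    have hx_m : x ⟨m, by omega⟩ = 0 := ih (by omega)
    have h1 := row ⟨m+1, by omega⟩
    have key : ∀ i : Fin n, (Bmat n) ⟨m+1, by omega⟩ i * x i =
        (if i = ⟨m+1, hm⟩ then x i else 0) - (if i = ⟨m, by omega⟩ then x i else 0) := by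
      intro i
      simp only [Bmat, Matrix.of_apply, Fin.ext_iff]
      split_ifs <;> first | exact ‹False›.elim | (exfalso; omega) | ring
    rw [Finset.sum_congr rfl fun i _ => key i, Finset.sum_sub_distrib,
      Finset.sum_ite_eq', Finset.sum_ite_eq'] at h1
    simp only [Finset.mem_univ, if_true, hx_m, sub_zero] at h1
    simpa using h1

lemma cartan_posdef_null (n : ℕ) (x : Fin n → ℚ)
    (h : x ⬝ᵥ (cartanAQ n).mulVec x = 0) : x = 0 := by
  rw [← BtB, ← Matrix.mulVec_mulVec, Matrix.dotProduct_mulVec, Matrix.vecMul_transpose] at h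
  set y := (Bmat n).mulVec x with hy
  have hz : ∀ k, y k = 0 := by
    have hnn : ∀ k ∈ Finset.univ, (0:ℚ) ≤ y k * y k := fun k _ => mul_self_nonneg _
    have := (Finset.sum_eq_zero_iff_of_nonneg hnn).mp (by simpa [dotProduct] using h)
    intro k
    have := this k (Finset.mem_univ k)
    exact mul_self_eq_zero.mp this
  exact Bmat_ker n x (funext hz)

/-- For every subset `I ⊆ {1,…,n}`, the columns `-c_i` of `-C(A_n)` for `i ∉ I`
together with the standard basis vectors `e_i` for `i ∈ I` are linearly independent
over `ℚ`; hence each maximal cone `σ_I` of the fan `Υ(A_n)` is simplicial of full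
dimension `n`. -/
theorem cone_generators_linearIndependent (n : ℕ) (I : Finset (Fin n)) :
    LinearIndependent ℚ (fun i : Fin n =>
      if i ∈ I then (Pi.single i 1 : Fin n → ℚ) else fun j => -(cartanAQ n j i)) := by
  rw [Fintype.linearIndependent_iff]
  intro g hg
  set a : Fin n → ℚ := fun i => if i ∈ I then 0 else g i with ha
  have hmv : ∀ j : Fin n, (cartanAQ n).mulVec a j = if j ∈ I then g j else 0 := by
    intro j
    have hgj := congr_fun hg j
    simp only [Finset.sum_apply, Pi.smul_apply, Pi.zero_apply] at hgj
    have key : ∀ i : Fin n,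
        g i • (if i ∈ I then (Pi.single i 1 : Fin n → ℚ) else fun j => -(cartanAQ n j i)) j =
        (if i ∈ I then (if j = i then g i else 0) else 0) - cartanAQ n j i * a i := by
      intro i
      by_cases hi : i ∈ I <;> simp [hi, ha, Pi.single_apply, mul_comm]
    rw [Finset.sum_congr rfl fun i _ => key i, Finset.sum_sub_distrib] at hgj
    have h1 : ∑ i, (if i ∈ I then (if j = i then g i else 0) else 0) =
        if j ∈ I then g j else 0 := by
      rw [Finset.sum_congr rfl (g := fun i => if j = i then (if i ∈ I then g i else 0) else 0)
        (fun i _ => by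
          show _ = if j = i then (if i ∈ I then g i else 0) else 0
          split_ifs <;> tauto), Finset.sum_ite_eq]
      simp
    rw [h1] at hgj
    have : (cartanAQ n).mulVec a j = ∑ i, cartanAQ n j i * a i := by
      simp [Matrix.mulVec, dotProduct]
    rw [this]
    linarith [hgj]
  have hQ : a ⬝ᵥ (cartanAQ n).mulVec a = 0 := by
    simp only [dotProduct]
    apply Finset.sum_eq_zero
    intro j _
    rw [hmv j]
    by_cases hj : j ∈ I <;> simp [ha, hj]
  have haz : a = 0 := cartan_posdef_null n a hQ
  intro i
  by_cases hi : i ∈ I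
  · have := hmv i
    rw [haz] at this
    simpa [hi, Matrix.mulVec] using this.symm
  · have := congr_fun haz i
    simpa [ha, hi] using this
end

section
/- Let R be an integral domain, y_0, …, y_n ∈ R all nonzero, and b_1, …, b_{n−1} ∈ R such that y_{i−1} y_{i+1} = b_i · y_i^2 for all 1 ≤ i ≤ n−1. Then for all 0 ≤ i < j < n one has y_i · y_{j+1} = (∏_{k=i+1}^{j} b_k) · y_{i+1} · y_j. -/
/-- Let `R` be an integral domain, `y_0, …, y_n ∈ R` all nonzero, and
`b_1, …, b_{n-1} ∈ R` with `y_{i-1} y_{i+1} = b_i y_i²` for `1 ≤ i ≤ n-1`. Then for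
all `0 ≤ i < j < n` one has `y_i y_{j+1} = (∏_{k=i+1}^{j} b_k) y_{i+1} y_j`. -/
theorem chain_quadric_relations (R : Type*) [CommRing R] [IsDomain R] (n : ℕ)
    (y b : ℕ → R)
    (hy : ∀ i, i ≤ n → y i ≠ 0)
    (hb : ∀ i, 1 ≤ i → i ≤ n - 1 → y (i - 1) * y (i + 1) = b i * (y i) ^ 2) :
    ∀ i j, i < j → j < n →
      y i * y (j + 1) = (∏ k ∈ Finset.Icc (i + 1) j, b k) * (y (i + 1) * y j) := by
  intro i j hij hjn
  induction j, hij using Nat.le_induction with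
  | base =>
      have h := hb (i + 1) (Nat.le_add_left 1 i) (by omega)
      simp only [Nat.add_sub_cancel] at h
      rw [Finset.Icc_self, Finset.prod_singleton]
      rw [h]; ring
  | succ j hij IH =>
      have IH' := IH (by omega)
      have h := hb (j + 1) (Nat.le_add_left 1 j) (by omega)
      simp only [Nat.add_sub_cancel] at h
      have hyj : y j ≠ 0 := hy j (by omega)
      apply mul_right_cancel₀ hyj
      rw [Finset.prod_Icc_succ_top (by omega : i + 1 ≤ j + 1)]
      calc y i * y (j + 1 + 1) * y j = y i * (y j * y (j + 1 + 1)) := by ring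
        _ = y i * (b (j + 1) * y (j + 1) ^ 2) := by rw [h]
        _ = (y i * y (j + 1)) * (b (j + 1) * y (j + 1)) := by ring
        _ = ((∏ k ∈ Finset.Icc (i + 1) j, b k) * (y (i + 1) * y j)) * (b (j + 1) * y (j + 1)) := by rw [IH']
        _ = (∏ k ∈ Finset.Icc (i + 1) j, b k) * b (j + 1) * (y (i + 1) * y (j + 1)) * y j := by ring
end
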